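/- Let d ≥ 1 be an integer, let σ₊ > 0, σ_I > 0, w > 0 and b ∈ ℝ be real numbers, and set η = b/w. Let μ be the product probability measure on ℝ^d with i.i.d. coordinates gaussianReal 1 σ₊², and ν the product probability measure on ℝ^d with i.i.d. coordinates gaussianReal 0 σ_I². Then the product measure μ ⊗ ν assigns to the event {(x, ε) : w·((x₁+ε₁) + … + (x_d+ε_d)) + b > 0} the probability Φ((η + d)/√(d·(σ₊² + σ_I²))); similarly, with μ' the product measure with i.i.d. coordinates gaussianReal (−1) σ₋² (σ₋ > 0), the measure μ' ⊗ ν assigns to the event {(x, ε) : w·((x₁+ε₁) + … + (x_d+ε_d)) + b < 0} the probability Φ((d − η)/√(d·(σ₋² + σ_I²))). -/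

import Mathlib

open MeasureTheory ProbabilityTheory Real

open scoped NNReal ENNReal


lemma rexp_eq_norm_cexp (b c d x : ℝ) :
    rexp (b*x^2 + c*x + d) = ‖Complex.exp ((b:ℂ) * x ^ 2 + c * x + d)‖ := by
  rw [Complex.norm_exp,
    show ((b:ℂ) * x ^ 2 + c * x + d) = ((b*x^2+c*x+d : ℝ) : ℂ) by push_cast; ring,
    Complex.ofReal_re]

lemma integrable_rexp_quadratic' {b : ℝ} (hb : b < 0) (c d : ℝ) :
    Integrable fun x : ℝ => rexp (b*x^2 + c*x + d) := by
  have h := (integrable_cexp_quadratic' (b := (b:ℂ)) (by simpa using hb) c d).norm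
  simpa only [← rexp_eq_norm_cexp] using h

lemma integral_rexp_quadratic' {b : ℝ} (hb : b < 0) (c d : ℝ) :
    ∫ x : ℝ, rexp (b*x^2 + c*x + d) = Real.sqrt (π / -b) * rexp (d - c^2/(4*b)) := by
  have h := integral_cexp_quadratic (b := (b:ℂ)) (by simpa using hb) c d
  have h1 : ∀ x : ℝ, Complex.exp ((b:ℂ) * x ^ 2 + c * x + d)
      = ((rexp (b*x^2 + c*x + d) : ℝ) : ℂ) := by
    intro x; rw [Complex.ofReal_exp]; push_cast; ring_nf
  have key : (∫ x : ℝ, ((rexp (b*x^2+c*x+d) : ℝ) : ℂ))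
      = ((∫ x : ℝ, rexp (b*x^2+c*x+d) : ℝ) : ℂ) := integral_ofReal
  simp_rw [h1, key] at h
  have h2 : ((π : ℂ) / -(b:ℂ)) ^ (1/2 : ℂ) = ((Real.sqrt (π / -b) : ℝ) : ℂ) := by
    rw [Real.sqrt_eq_rpow,
      show ((π:ℂ) / -(b:ℂ)) = ((π / -b : ℝ) : ℂ) by push_cast; ring,
      show ((1:ℂ)/2) = ((1/2 : ℝ) : ℂ) by push_cast; ring,
      ← Complex.ofReal_cpow (div_nonneg Real.pi_pos.le (by linarith))]
  have h3 : Complex.exp ((d:ℂ) - (c:ℂ)^2 / (4 * b)) = ((rexp (d - c^2/(4*b)) : ℝ) : ℂ) := by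
    rw [Complex.ofReal_exp]; push_cast; ring_nf
  rw [h2, h3, ← Complex.ofReal_mul] at h
  exact_mod_cast h

lemma gaussianPDFReal_mul_eq (m₁ m₂ : ℝ) {v₁ v₂ : ℝ≥0} (h₁ : v₁ ≠ 0) (h₂ : v₂ ≠ 0) (t x : ℝ) :
    gaussianPDFReal m₁ v₁ x * gaussianPDFReal (m₂ + x) v₂ t
      = ((Real.sqrt (2*π*v₁))⁻¹ * (Real.sqrt (2*π*v₂))⁻¹) *
        rexp ((-(((v₁:ℝ)+v₂)/(2*v₁*v₂)))*x^2 + (m₁/v₁ + (t-m₂)/v₂)*x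
          + (-(m₁^2/(2*v₁)) - (t-m₂)^2/(2*v₂))) := by
  have hV₁ : (0:ℝ) < v₁ := by positivity
  have hV₂ : (0:ℝ) < v₂ := by positivity
  unfold gaussianPDFReal
  rw [mul_mul_mul_comm, ← Real.exp_add]
  congr 1
  field_simp
  ring

lemma gauss_combine {A B C D E F : ℝ} (hA : A ≠ 0) (hB : B ≠ 0) (hC : C ≠ 0)
    (hDC : D * C = A * B) (hEF : E = F) :
    (A⁻¹ * B⁻¹) * (D * rexp E) = C⁻¹ * rexp F := by
  rw [hEF]
  have hD : D = A * B / C := (eq_div_iff hC).mpr hDC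
  rw [hD]
  field_simp

lemma gaussianPDFReal_conv (m₁ m₂ : ℝ) {v₁ v₂ : ℝ≥0} (h₁ : v₁ ≠ 0) (h₂ : v₂ ≠ 0) (t : ℝ) :
    ∫ x : ℝ, gaussianPDFReal m₁ v₁ x * gaussianPDFReal (m₂ + x) v₂ t
      = gaussianPDFReal (m₁ + m₂) (v₁ + v₂) t := by
  have hV₁ : (0:ℝ) < v₁ := by positivity
  have hV₂ : (0:ℝ) < v₂ := by positivity
  have hb : (-(((v₁:ℝ)+v₂)/(2*v₁*v₂))) < 0 := by
    have h0 : (0:ℝ) < ((v₁:ℝ)+v₂)/(2*v₁*v₂) := by positivity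
    linarith
  simp_rw [gaussianPDFReal_mul_eq m₁ m₂ h₁ h₂ t]
  rw [integral_const_mul, integral_rexp_quadratic' hb]
  unfold gaussianPDFReal
  have hsum : ((v₁:ℝ)+v₂) ≠ 0 := by positivity
  refine gauss_combine (by positivity) (by positivity) (by positivity) ?_ ?_
  · rw [← Real.sqrt_mul (le_of_lt (div_pos Real.pi_pos (by rw [neg_neg]; positivity))),
      ← Real.sqrt_mul (by positivity : (0:ℝ) ≤ 2*π*(v₁:ℝ))]
    congr 1
    push_cast
    field_simp
  · have e1 : (4:ℝ) * (-(((v₁:ℝ)+v₂)/(2*(v₁:ℝ)*(v₂:ℝ)))) = -((2*((v₁:ℝ)+v₂))/((v₁:ℝ)*(v₂:ℝ))) := by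
      field_simp
      ring
    rw [e1, div_neg, div_div_eq_mul_div]
    push_cast
    field_simp
    ring


lemma lintegral_gaussianPDF_conv (m₁ m₂ : ℝ) {v₁ v₂ : ℝ≥0} (h₁ : v₁ ≠ 0) (h₂ : v₂ ≠ 0) (t : ℝ) :
    ∫⁻ x : ℝ, gaussianPDF m₁ v₁ x * gaussianPDF (m₂ + x) v₂ t
      = gaussianPDF (m₁ + m₂) (v₁ + v₂) t := by
  have hb : (-(((v₁:ℝ)+v₂)/(2*(v₁:ℝ)*(v₂:ℝ)))) < 0 := by
    have h0 : (0:ℝ) < ((v₁:ℝ)+v₂)/(2*(v₁:ℝ)*v₂) := by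
      have : (0:ℝ) < (v₁:ℝ) := by positivity
      have : (0:ℝ) < (v₂:ℝ) := by positivity
      positivity
    linarith
  have hint : Integrable (fun x => gaussianPDFReal m₁ v₁ x * gaussianPDFReal (m₂+x) v₂ t) := by
    simp_rw [gaussianPDFReal_mul_eq m₁ m₂ h₁ h₂ t]
    exact (integrable_rexp_quadratic' hb _ _).const_mul _
  unfold gaussianPDF
  simp_rw [← ENNReal.ofReal_mul (gaussianPDFReal_nonneg m₁ v₁ _)]
  rw [← ofReal_integral_eq_lintegral_ofReal hint
    (ae_of_all _ fun x => mul_nonneg (gaussianPDFReal_nonneg _ _ _) (gaussianPDFReal_nonneg _ _ _)),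
    gaussianPDFReal_conv m₁ m₂ h₁ h₂ t]

lemma measurable_gaussianPDF_jointly (m₂ : ℝ) (v₂ : ℝ≥0) :
    Measurable (fun q : ℝ × ℝ => gaussianPDF (m₂ + q.1) v₂ q.2) := by
  unfold gaussianPDF gaussianPDFReal
  fun_prop

lemma gaussianReal_conv (m₁ m₂ : ℝ) (v₁ v₂ : ℝ≥0) :
    Measure.map (fun p : ℝ × ℝ => p.1 + p.2) ((gaussianReal m₁ v₁).prod (gaussianReal m₂ v₂))
      = gaussianReal (m₁ + m₂) (v₁ + v₂) := by
  by_cases h₁ : v₁ = 0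
  · subst h₁
    rw [gaussianReal_zero_var, Measure.dirac_prod,
      Measure.map_map (by fun_prop) (by fun_prop)]
    have : ((fun p : ℝ × ℝ => p.1 + p.2) ∘ (Prod.mk m₁)) = fun x => m₁ + x := rfl
    rw [this, gaussianReal_map_const_add, add_comm m₂ m₁, zero_add]
  by_cases h₂ : v₂ = 0
  · subst h₂
    rw [gaussianReal_zero_var, Measure.prod_dirac,
      Measure.map_map (by fun_prop) (by fun_prop)]
    have : ((fun p : ℝ × ℝ => p.1 + p.2) ∘ (fun x => (x, m₂))) = fun x => x + m₂ := rfl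
    rw [this, gaussianReal_map_add_const, add_zero]
  have hsum : v₁ + v₂ ≠ 0 := by simp [h₁]
  ext s hs
  rw [Measure.map_apply (by fun_prop : Measurable (fun p : ℝ×ℝ => p.1+p.2)) hs,
    Measure.prod_apply ((by fun_prop : Measurable (fun p : ℝ×ℝ => p.1+p.2)) hs)]
  have hinner : ∀ x : ℝ, (gaussianReal m₂ v₂) (Prod.mk x ⁻¹' ((fun p : ℝ×ℝ => p.1+p.2) ⁻¹' s))
      = ∫⁻ t in s, gaussianPDF (m₂+x) v₂ t := by
    intro x
    have hset : Prod.mk x ⁻¹' ((fun p : ℝ×ℝ => p.1+p.2) ⁻¹' s) = (fun y => x + y) ⁻¹' s := rfl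
    rw [hset, ← Measure.map_apply (by fun_prop) hs, gaussianReal_map_const_add,
      gaussianReal_apply _ h₂]
  simp_rw [hinner]
  have hjm : Measurable (fun x : ℝ => ∫⁻ t in s, gaussianPDF (m₂+x) v₂ t) := by
    exact (measurable_gaussianPDF_jointly m₂ v₂).lintegral_prod_right'
  rw [gaussianReal_of_var_ne_zero _ h₁,
    lintegral_withDensity_eq_lintegral_mul _ (measurable_gaussianPDF _ _) hjm]
  have hswap : ∫⁻ x, gaussianPDF m₁ v₁ x * ∫⁻ t in s, gaussianPDF (m₂+x) v₂ t
      = ∫⁻ t in s, ∫⁻ x, gaussianPDF m₁ v₁ x * gaussianPDF (m₂+x) v₂ t := by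
    have h1 : ∀ x : ℝ, gaussianPDF m₁ v₁ x * ∫⁻ t in s, gaussianPDF (m₂+x) v₂ t
        = ∫⁻ t in s, gaussianPDF m₁ v₁ x * gaussianPDF (m₂+x) v₂ t :=
      fun x => (lintegral_const_mul _ (measurable_gaussianPDF (m₂+x) v₂)).symm
    rw [lintegral_congr h1, lintegral_lintegral_swap]
    exact ((measurable_gaussianPDF m₁ v₁).comp measurable_fst |>.mul
      ((measurable_gaussianPDF_jointly m₂ v₂).comp (measurable_fst.prodMk measurable_snd))).aemeasurable
  simp only [Pi.mul_apply] at hswap ⊢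
  rw [hswap]
  simp_rw [lintegral_gaussianPDF_conv m₁ m₂ h₁ h₂]
  rw [← gaussianReal_apply _ hsum s]


lemma map_sum_pi_gaussian (m : ℝ) (v : ℝ≥0) (n : ℕ) :
    Measure.map (fun x : Fin n → ℝ => ∑ i, x i) (Measure.pi fun _ : Fin n => gaussianReal m v)
      = gaussianReal (n * m) (n * v) := by
  induction n with
  | zero =>
      have : (fun x : Fin 0 → ℝ => ∑ i, x i) = fun _ => (0:ℝ) := by
        funext x; simp
      rw [this, Measure.map_const]
      simp
  | succ n ih =>
      have hmp := measurePreserving_piFinSuccAbove (fun _ : Fin (n+1) => gaussianReal m v) 0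
      have hsum : (fun x : Fin (n+1) → ℝ => ∑ i, x i)
          = (fun p : ℝ × (Fin n → ℝ) => p.1 + ∑ i, p.2 i)
            ∘ (MeasurableEquiv.piFinSuccAbove (fun _ : Fin (n+1) => ℝ) 0) := by
        funext x
        simp [MeasurableEquiv.piFinSuccAbove, Fin.sum_univ_succAbove _ 0]
        rfl
      rw [hsum, ← Measure.map_map (g := fun p : ℝ × (Fin n → ℝ) => p.1 + ∑ i, p.2 i)
          (f := ⇑(MeasurableEquiv.piFinSuccAbove (fun _ : Fin (n+1) => ℝ) 0))
          (by fun_prop) (MeasurableEquiv.piFinSuccAbove _ 0).measurable,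
        hmp.map_eq]
      have hcomp : (fun p : ℝ × (Fin n → ℝ) => p.1 + ∑ i, p.2 i)
          = (fun q : ℝ × ℝ => q.1 + q.2) ∘ (Prod.map id (fun y : Fin n → ℝ => ∑ i, y i)) := rfl
      rw [hcomp, ← Measure.map_map (g := fun q : ℝ × ℝ => q.1 + q.2)
          (f := Prod.map id (fun y : Fin n → ℝ => ∑ i, y i)) (by fun_prop) (by fun_prop),
        ← Measure.map_prod_map _ _ measurable_id (by fun_prop),
        Measure.map_id, ih, gaussianReal_conv]
      congr 1 <;> push_cast <;> ring


/-- The standard normal cumulative distribution function. -/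
noncomputable def Phi (t : ℝ) : ℝ :=
  ((gaussianReal 0 1) (Set.Iic t)).toReal

lemma gaussianReal_eq_map (μ : ℝ) {v : ℝ≥0} (hv : v ≠ 0) :
    gaussianReal μ v = Measure.map (fun x => Real.sqrt v * x + μ) (gaussianReal 0 1) := by
  have hmul : Measure.map (fun x : ℝ => Real.sqrt v * x) (gaussianReal 0 1) = gaussianReal 0 v := by
    have hv1 : (⟨(Real.sqrt v)^2, sq_nonneg _⟩ : ℝ≥0) * 1 = v := by
      ext
      simp [Real.sq_sqrt (NNReal.coe_nonneg v)]
    rw [show (fun x : ℝ => Real.sqrt v * x) = (Real.sqrt v * ·) from rfl,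
      gaussianReal_map_const_mul]
    congr 1
    · simp
  have hadd : Measure.map (fun x : ℝ => x + μ) (gaussianReal 0 v) = gaussianReal μ v := by
    rw [show (fun x : ℝ => x + μ) = (· + μ) from rfl, gaussianReal_map_add_const, zero_add]
  rw [← hadd, ← hmul, Measure.map_map (by fun_prop) (by fun_prop)]
  rfl

noncomputable instance : NullSingletonClass (gaussianReal 0 1) :=
  ⟨fun x => (gaussianReal_absolutelyContinuous 0 one_ne_zero) (measure_singleton x)⟩

lemma gaussianReal01_neg : Measure.map (fun x : ℝ => -x) (gaussianReal 0 1) = gaussianReal 0 1 := by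
  have := gaussianReal_map_const_mul (μ := 0) (v := 1) (-1)
  rw [show ((-1 : ℝ) * ·) = (fun x : ℝ => -x) by funext x; ring] at this
  have h1 : (⟨(-1:ℝ)^2, sq_nonneg _⟩ : ℝ≥0) * 1 = 1 := by
    ext
    norm_num
  rw [this]
  congr 1
  · simp

lemma gaussianReal01_Ioi_toReal (c : ℝ) :
    ((gaussianReal 0 1) (Set.Ioi c)).toReal = Phi (-c) := by
  conv_lhs => rw [← gaussianReal01_neg]
  rw [Measure.map_apply (by fun_prop) measurableSet_Ioi]
  have : (fun x : ℝ => -x) ⁻¹' (Set.Ioi c) = Set.Iio (-c) := by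
    ext x; simp [lt_neg]
  rw [this, Phi, measure_congr Iio_ae_eq_Iic]

lemma gaussianReal01_Iio_toReal (c : ℝ) :
    ((gaussianReal 0 1) (Set.Iio c)).toReal = Phi c := by
  rw [Phi, measure_congr Iio_ae_eq_Iic]

lemma gaussianReal_Ioi_toReal (μ : ℝ) {v : ℝ≥0} (hv : v ≠ 0) (a : ℝ) :
    ((gaussianReal μ v) (Set.Ioi a)).toReal = Phi ((μ - a)/Real.sqrt v) := by
  have hs : (0:ℝ) < Real.sqrt v := Real.sqrt_pos.mpr (by positivity)
  rw [gaussianReal_eq_map μ hv, Measure.map_apply (by fun_prop) measurableSet_Ioi]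
  have : (fun x : ℝ => Real.sqrt v * x + μ) ⁻¹' (Set.Ioi a) = Set.Ioi ((a - μ)/Real.sqrt v) := by
    ext x
    simp only [Set.mem_preimage, Set.mem_Ioi]
    rw [div_lt_iff₀ hs]
    constructor <;> intro h <;> nlinarith
  rw [this, gaussianReal01_Ioi_toReal]
  congr 1
  field_simp
  ring
lemma gaussianReal_Iio_toReal (μ : ℝ) {v : ℝ≥0} (hv : v ≠ 0) (a : ℝ) :
    ((gaussianReal μ v) (Set.Iio a)).toReal = Phi ((a - μ)/Real.sqrt v) := by
  have hs : (0:ℝ) < Real.sqrt v := Real.sqrt_pos.mpr (by positivity)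
  rw [gaussianReal_eq_map μ hv, Measure.map_apply (by fun_prop) measurableSet_Iio]
  have : (fun x : ℝ => Real.sqrt v * x + μ) ⁻¹' (Set.Iio a) = Set.Iio ((a - μ)/Real.sqrt v) := by
    ext x
    simp only [Set.mem_preimage, Set.mem_Iio]
    rw [lt_div_iff₀ hs]
    constructor <;> intro h <;> nlinarith
  rw [this, gaussianReal01_Iio_toReal]

/-- Input smoothness formulas: probabilities of correct classification of Gaussian class
samples perturbed by additive input Gaussian noise. -/
theorem input_smoothness_formulas
    (d : ℕ) (hd : 1 ≤ d)
    (σp σm σI w b : ℝ) (hσp : 0 < σp) (hσm : 0 < σm) (hσI : 0 < σI) (hw : 0 < w)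
    (η : ℝ) (hη : η = b / w) :
    (((Measure.pi fun _ : Fin d => gaussianReal 1 ⟨σp ^ 2, sq_nonneg σp⟩).prod
          (Measure.pi fun _ : Fin d => gaussianReal 0 ⟨σI ^ 2, sq_nonneg σI⟩))
        {q : (Fin d → ℝ) × (Fin d → ℝ) | w * (∑ i, (q.1 i + q.2 i)) + b > 0}).toReal
      = Phi ((η + d) / Real.sqrt (d * (σp ^ 2 + σI ^ 2)))
    ∧ (((Measure.pi fun _ : Fin d => gaussianReal (-1) ⟨σm ^ 2, sq_nonneg σm⟩).prod
          (Measure.pi fun _ : Fin d => gaussianReal 0 ⟨σI ^ 2, sq_nonneg σI⟩))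
        {q : (Fin d → ℝ) × (Fin d → ℝ) | w * (∑ i, (q.1 i + q.2 i)) + b < 0}).toReal
      = Phi ((d - η) / Real.sqrt (d * (σm ^ 2 + σI ^ 2))) := by
  have hd0 : (0:ℝ) < d := by exact_mod_cast hd
  set vp : ℝ≥0 := ⟨σp ^ 2, sq_nonneg σp⟩ with hvp
  set vm : ℝ≥0 := ⟨σm ^ 2, sq_nonneg σm⟩ with hvm
  set vI : ℝ≥0 := ⟨σI ^ 2, sq_nonneg σI⟩ with hvI
  have hvpne : vp ≠ 0 := by
    intro h
    have : σp ^ 2 = 0 := congrArg NNReal.toReal h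
    nlinarith
  have hvmne : vm ≠ 0 := by
    intro h
    have : σm ^ 2 = 0 := congrArg NNReal.toReal h
    nlinarith
  have hvIne : vI ≠ 0 := by
    intro h
    have : σI ^ 2 = 0 := congrArg NNReal.toReal h
    nlinarith
  have hT : Measurable (fun q : (Fin d → ℝ) × (Fin d → ℝ) => (∑ i, q.1 i) + (∑ i, q.2 i)) := by
    fun_prop
  -- distribution of the sum
  have hmap : ∀ (m : ℝ) (v : ℝ≥0),
      Measure.map (fun q : (Fin d → ℝ) × (Fin d → ℝ) => (∑ i, q.1 i) + (∑ i, q.2 i))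
        ((Measure.pi fun _ : Fin d => gaussianReal m v).prod
          (Measure.pi fun _ : Fin d => gaussianReal 0 vI))
      = gaussianReal (d * m) (d * v + d * vI) := by
    intro m v
    have hcomp : (fun q : (Fin d → ℝ) × (Fin d → ℝ) => (∑ i, q.1 i) + (∑ i, q.2 i))
        = (fun p : ℝ × ℝ => p.1 + p.2)
          ∘ (Prod.map (fun y : Fin d → ℝ => ∑ i, y i) (fun y : Fin d → ℝ => ∑ i, y i)) := rfl
    rw [hcomp, ← Measure.map_map (g := fun p : ℝ × ℝ => p.1 + p.2)
        (f := Prod.map (fun y : Fin d → ℝ => ∑ i, y i) (fun y : Fin d → ℝ => ∑ i, y i))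
        (by fun_prop) (by fun_prop),
      ← Measure.map_prod_map _ _ (by fun_prop) (by fun_prop),
      map_sum_pi_gaussian, map_sum_pi_gaussian, gaussianReal_conv]
    norm_num
  have hne : ∀ (m : ℝ) (v : ℝ≥0), v ≠ 0 → ((d:ℝ≥0) * v + (d:ℝ≥0) * vI) ≠ 0 := by
    intro m v hv h
    exact mul_ne_zero (Nat.cast_ne_zero.mpr (by omega)) hv (add_eq_zero.mp h).1
  constructor
  · have hset : {q : (Fin d → ℝ) × (Fin d → ℝ) | w * (∑ i, (q.1 i + q.2 i)) + b > 0}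
        = (fun q : (Fin d → ℝ) × (Fin d → ℝ) => (∑ i, q.1 i) + (∑ i, q.2 i)) ⁻¹'
          (Set.Ioi (-η)) := by
      ext q
      simp only [Set.mem_setOf_eq, Set.mem_preimage, Set.mem_Ioi, Finset.sum_add_distrib]
      rw [hη, gt_iff_lt, show -(b/w) = (-b)/w by ring, div_lt_iff₀ hw]
      constructor <;> intro h <;> linarith
    rw [hset, ← Measure.map_apply hT measurableSet_Ioi, hmap 1 vp,
      gaussianReal_Ioi_toReal _ (hne 1 vp hvpne) (-η)]
    congr 1
    have hcoe : ((d * vp + d * vI : ℝ≥0) : ℝ) = d * (σp ^ 2 + σI ^ 2) := by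
      push_cast
      show (d:ℝ) * σp^2 + (d:ℝ) * σI^2 = _
      ring
    rw [hcoe]
    ring
  · have hset : {q : (Fin d → ℝ) × (Fin d → ℝ) | w * (∑ i, (q.1 i + q.2 i)) + b < 0}
        = (fun q : (Fin d → ℝ) × (Fin d → ℝ) => (∑ i, q.1 i) + (∑ i, q.2 i)) ⁻¹'
          (Set.Iio (-η)) := by
      ext q
      simp only [Set.mem_setOf_eq, Set.mem_preimage, Set.mem_Iio, Finset.sum_add_distrib]
      rw [hη, show -(b/w) = (-b)/w by ring, lt_div_iff₀ hw]
      constructor <;> intro h <;> linarith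
    rw [hset, ← Measure.map_apply hT measurableSet_Iio, hmap (-1) vm,
      gaussianReal_Iio_toReal _ (hne (-1) vm hvmne) (-η)]
    congr 1
    have hcoe : ((d * vm + d * vI : ℝ≥0) : ℝ) = d * (σm ^ 2 + σI ^ 2) := by
      push_cast
      show (d:ℝ) * σm^2 + (d:ℝ) * σI^2 = _
      ring
    rw [hcoe]
    ring
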